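/- Let n ∈ ℕ, L = 1/√3 and ω* = (2n+1)π/(2L). Define φ : [0, 2L] → ℝ using the characteristic-function formulas with data u₀ = 1, v₀ = 0, v₀' = (−1)ⁿ·ω*, i.e. φ(s) = −((−1)ⁿ/2)·sin(ω*(L − s)) for s ∈ [0, L] and φ(s) = sin(ω*(s − L))/sin(ω*L) for s ∈ [L, 2L]. Then φ(s) = −cos(ω*·s)/2 for all s ∈ [0, L] and φ(s) = −cos(ω*·s) for all s ∈ [L, 2L]; the set {t ∈ [0, 2L) : φ(t) = 0} is exactly {(2q+1)L/(2n+1) : q ∈ ℕ, 0 ≤ q ≤ 2n} and has exactly 2n+1 elements; and the set {t ∈ [0, 2L) : sin(ω*·t) = 0} of zeros of the piecewise derivative of φ is exactly {2qL/(2n+1) : q ∈ ℕ, 0 ≤ q ≤ 2n} and has exactly 2n+1 elements. (This is the case β ∈ (1/3, 1/2) of the characteristic function at the Dirac frequency ω* = ωₙ*.) -/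

import Mathlib

open Real

/-- The edge length `L = 1/√3`. -/
noncomputable def L : ℝ := 1 / Real.sqrt 3

/-- The Dirac frequency `ωₙ* = (2n+1)π/(2L)`. -/
noncomputable def ωstar (n : ℕ) : ℝ := (2 * n + 1) * π / (2 * L)

/-- The characteristic function at the Dirac frequency with data
`u₀ = 1, v₀ = 0, v₀' = (−1)ⁿ·ω*`: `φ(s) = −((−1)ⁿ/2)·sin(ω*(L − s))` on `[0, L]`
and `φ(s) = sin(ω*(s − L))/sin(ω*L)` on `[L, 2L]`. -/
noncomputable def φ (n : ℕ) (s : ℝ) : ℝ :=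
  if s ≤ L then -(((-1 : ℝ) ^ n / 2) * Real.sin (ωstar n * (L - s)))
  else Real.sin (ωstar n * (s - L)) / Real.sin (ωstar n * L)

lemma hLpos : (0:ℝ) < L := by
  unfold L; positivity

lemma hden (n : ℕ) : ((2:ℝ) * n + 1) ≠ 0 := by positivity

lemma homega (n : ℕ) (r : ℝ) : ωstar n * (r * L / (2 * n + 1)) = r * (π / 2) := by
  unfold ωstar; field_simp [hLpos.ne']

lemma hωL (n : ℕ) : ωstar n * L = n * π + π / 2 := by
  have h := homega n (2 * n + 1)
  have h2 : (2 * (n:ℝ) + 1) * L / (2 * (n:ℝ) + 1) = L := by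
    field_simp
  rw [h2] at h
  rw [h]; ring

lemma sinωL (n : ℕ) : Real.sin (ωstar n * L) = (-1) ^ n := by
  rw [hωL, Real.sin_add_pi_div_two]
  have := Real.cos_nat_mul_pi_sub 0 n
  simpa using this

lemma cosωL (n : ℕ) : Real.cos (ωstar n * L) = 0 := by
  rw [hωL, Real.cos_add_pi_div_two, Real.sin_nat_mul_pi, neg_zero]

lemma hsq (n : ℕ) : ((-1:ℝ)) ^ n * (-1) ^ n = 1 := by
  rw [← pow_add]
  exact Even.neg_one_pow ⟨n, rfl⟩

lemma hωpos (n : ℕ) : 0 < ωstar n := by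
  unfold ωstar
  have := hLpos
  positivity

theorem stmt_17 (n : ℕ) :
    (∀ s ∈ Set.Icc (0 : ℝ) L, φ n s = -(Real.cos (ωstar n * s) / 2)) ∧
    (∀ s ∈ Set.Icc L (2 * L), φ n s = -Real.cos (ωstar n * s)) ∧
    {t ∈ Set.Ico (0 : ℝ) (2 * L) | φ n t = 0} =
      (fun q : ℕ => (2 * q + 1) * L / (2 * n + 1)) '' {q : ℕ | q ≤ 2 * n} ∧
    {t ∈ Set.Ico (0 : ℝ) (2 * L) | φ n t = 0}.ncard = 2 * n + 1 ∧
    {t ∈ Set.Ico (0 : ℝ) (2 * L) | Real.sin (ωstar n * t) = 0} =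
      (fun q : ℕ => 2 * q * L / (2 * n + 1)) '' {q : ℕ | q ≤ 2 * n} ∧
    {t ∈ Set.Ico (0 : ℝ) (2 * L) | Real.sin (ωstar n * t) = 0}.ncard = 2 * n + 1 := by
  have hL := hLpos
  have part1 : ∀ s ∈ Set.Icc (0 : ℝ) L, φ n s = -(Real.cos (ωstar n * s) / 2) := by
    intro s hs
    rw [φ, if_pos hs.2]
    have h : ωstar n * (L - s) = ωstar n * L - ωstar n * s := by ring
    rw [h, Real.sin_sub, sinωL, cosωL]
    linear_combination (-(Real.cos (ωstar n * s) / 2)) * hsq n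
  have part2 : ∀ s ∈ Set.Icc L (2 * L), φ n s = -Real.cos (ωstar n * s) := by
    intro s hs
    rcases eq_or_lt_of_le hs.1 with h | h
    · subst h
      simp [φ, cosωL]
    · rw [φ, if_neg (not_le.mpr h)]
      have he : ωstar n * (s - L) = ωstar n * s - ωstar n * L := by ring
      rw [he, Real.sin_sub, sinωL, cosωL]
      have hne : ((-1:ℝ)) ^ n ≠ 0 := pow_ne_zero _ (by norm_num)
      field_simp
      ring
  have hcos : ∀ t ∈ Set.Ico (0:ℝ) (2*L), (φ n t = 0 ↔ Real.cos (ωstar n * t) = 0) := by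
    intro t ht
    rcases le_or_gt t L with h | h
    · rw [part1 t ⟨ht.1, h⟩]
      simp
    · rw [part2 t ⟨h.le, ht.2.le⟩]
      simp
  have key3 : {t ∈ Set.Ico (0 : ℝ) (2 * L) | φ n t = 0} =
      (fun q : ℕ => (2 * q + 1) * L / (2 * n + 1)) '' {q : ℕ | q ≤ 2 * n} := by
    ext t
    simp only [Set.mem_setOf_eq, Set.mem_image]
    constructor
    · rintro ⟨ht, hz⟩
      rw [hcos t ht, Real.cos_eq_zero_iff] at hz
      obtain ⟨k, hk⟩ := hz
      have hteq : t = (2 * k + 1) * L / (2 * n + 1) := by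
        have h2 := homega n (2 * k + 1)
        have h3 : ωstar n * t = ωstar n * ((2 * k + 1) * L / (2 * n + 1)) := by
          rw [h2, hk]; push_cast; ring
        exact mul_left_cancel₀ (hωpos n).ne' h3
      have hp : (0:ℝ) < L / (2 * n + 1) := by positivity
      have hmul : t = (2 * (k:ℝ) + 1) * (L / (2 * n + 1)) := by rw [hteq]; ring
      have hub : (2 * (2*(n:ℝ)+1)) * (L / (2 * n + 1)) = 2 * L := by
        field_simp
      have hk0R : (0:ℝ) ≤ 2 * k + 1 := by
        nlinarith [ht.1, hp, hmul]
      have hkuR : (2 * (k:ℝ) + 1) < 2 * (2*(n:ℝ)+1) := by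
        nlinarith [ht.2, hp, hmul, hub]
      have hk0 : (0:ℤ) ≤ k := by
        have : (-1:ℝ) < (k:ℝ) := by linarith
        have := (by exact_mod_cast this : (-1:ℤ) < k)
        omega
      have hku : k ≤ 2 * n := by
        have : (k:ℝ) < 2 * (n:ℝ) + 1 := by linarith
        have := (by exact_mod_cast this : k < 2 * (n:ℤ) + 1)
        omega
      refine ⟨k.toNat, by omega, ?_⟩
      have hcast : ((k.toNat : ℕ) : ℝ) = (k : ℝ) := by
        exact_mod_cast Int.toNat_of_nonneg hk0
      show (2 * (↑k.toNat:ℝ) + 1) * L / (2 * ↑n + 1) = t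
      rw [hcast, ← hteq]
    · rintro ⟨q, hq, rfl⟩
      have hq' : (q:ℝ) ≤ 2 * n := by exact_mod_cast hq
      have h0 : (0:ℝ) ≤ (2 * q + 1) * L / (2 * n + 1) := by positivity
      have h2 : (2 * (q:ℝ) + 1) * L / (2 * n + 1) < 2 * L := by
        rw [div_lt_iff₀ (by positivity)]
        nlinarith
      refine ⟨⟨h0, h2⟩, ?_⟩
      rw [hcos _ ⟨h0, h2⟩, Real.cos_eq_zero_iff]
      refine ⟨q, ?_⟩
      have := homega n (2 * q + 1)
      rw [this]; push_cast; ring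
  have hinj1 : Function.Injective (fun q : ℕ => (2 * (q:ℝ) + 1) * L / (2 * n + 1)) := by
    have hsm : StrictMono (fun q : ℕ => (2 * (q:ℝ) + 1) * L / (2 * n + 1)) := by
      intro a b hab
      dsimp only
      rw [div_lt_div_iff_of_pos_right (by positivity)]
      have : (a:ℝ) < b := by exact_mod_cast hab
      nlinarith
    exact hsm.injective
  have hinj2 : Function.Injective (fun q : ℕ => 2 * (q:ℝ) * L / (2 * n + 1)) := by
    have hsm : StrictMono (fun q : ℕ => 2 * (q:ℝ) * L / (2 * n + 1)) := by
      intro a b hab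
      dsimp only
      rw [div_lt_div_iff_of_pos_right (by positivity)]
      have : (a:ℝ) < b := by exact_mod_cast hab
      nlinarith
    exact hsm.injective
  have hdom : {q : ℕ | q ≤ 2 * n} = ↑(Finset.Iic (2 * n)) := by
    ext q; simp
  have key5 : {t ∈ Set.Ico (0 : ℝ) (2 * L) | Real.sin (ωstar n * t) = 0} =
      (fun q : ℕ => 2 * q * L / (2 * n + 1)) '' {q : ℕ | q ≤ 2 * n} := by
    ext t
    simp only [Set.mem_setOf_eq, Set.mem_image]
    constructor
    · rintro ⟨ht, hz⟩
      rw [Real.sin_eq_zero_iff] at hz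
      obtain ⟨k, hk⟩ := hz
      have hteq : t = 2 * k * L / (2 * n + 1) := by
        have h2 := homega n (2 * k)
        have h3 : ωstar n * t = ωstar n * ((2 * k) * L / (2 * n + 1)) := by
          rw [h2, ← hk]; push_cast; ring
        exact mul_left_cancel₀ (hωpos n).ne' h3
      have hp : (0:ℝ) < L / (2 * n + 1) := by positivity
      have hmul : t = (2 * (k:ℝ)) * (L / (2 * n + 1)) := by rw [hteq]; ring
      have hub : (2 * (2*(n:ℝ)+1)) * (L / (2 * n + 1)) = 2 * L := by
        field_simp
      have hk0R : (0:ℝ) ≤ 2 * k := by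
        nlinarith [ht.1, hp, hmul]
      have hkuR : (2 * (k:ℝ)) < 2 * (2*(n:ℝ)+1) := by
        nlinarith [ht.2, hp, hmul, hub]
      have hk0 : (0:ℤ) ≤ k := by
        have : (0:ℝ) ≤ (k:ℝ) := by linarith
        exact_mod_cast this
      have hku : k ≤ 2 * n := by
        have : (k:ℝ) < 2 * (n:ℝ) + 1 := by linarith
        have := (by exact_mod_cast this : k < 2 * (n:ℤ) + 1)
        omega
      refine ⟨k.toNat, by omega, ?_⟩
      have hcast : ((k.toNat : ℕ) : ℝ) = (k : ℝ) := by
        exact_mod_cast Int.toNat_of_nonneg hk0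
      show 2 * (↑k.toNat:ℝ) * L / (2 * ↑n + 1) = t
      rw [hcast, ← hteq]
    · rintro ⟨q, hq, rfl⟩
      have hq' : (q:ℝ) ≤ 2 * n := by exact_mod_cast hq
      have h0 : (0:ℝ) ≤ 2 * q * L / (2 * n + 1) := by positivity
      have h2 : 2 * (q:ℝ) * L / (2 * n + 1) < 2 * L := by
        rw [div_lt_iff₀ (by positivity)]
        nlinarith
      refine ⟨⟨h0, h2⟩, ?_⟩
      rw [Real.sin_eq_zero_iff]
      refine ⟨q, ?_⟩
      have := homega n (2 * q)
      rw [this]; push_cast; ring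
  refine ⟨part1, part2, key3, ?_, key5, ?_⟩
  · rw [key3, Set.ncard_image_of_injective _ hinj1, hdom, Set.ncard_coe_finset,
      Nat.card_Iic]
  · rw [key5, Set.ncard_image_of_injective _ hinj2, hdom, Set.ncard_coe_finset,
      Nat.card_Iic]
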